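/- Fix integers k ≥ 1, n ≥ 1, nonnegative integers s₁,…,s_k, t₁,…,t_k, d₁,…,d_k and nonnegative integers e_{i,j} = e_{j,i} for i ≠ j in {1,…,k}, such that for every i: d_i = s_i + t_i, d_i = Σ_{j≠i} e_{i,j}, s_i + t_i > 0, and Σ_{j≠i} e_{i,j} > 0. Let α₁,…,α_k, β₁,…,β_k be permutations of {1,…,2n} such that at least one of α₁,…,α_k,β₁,…,β_k is connected. Then for every flow f in the associated flow network, F_{n,n}(α,β) ≥ |f|·(2n − 2) + 2; equivalently X(2n−2) − F_{n,n}(α,β) ≤ −2 where X is the maximum value of a flow. -/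

import Mathlib

/-!
For a permutation `σ` of a finite set of size `m`, `cycleCount σ` is the number of cycles
(fixed points count as cycles) and `permLen σ = m - cycleCount σ` (the minimal number of
transpositions needed to write `σ`).  We model `{1,…,2n}` as `Fin n ⊕ Fin n`, the first
summand being `{1,…,n}` and the second `{n+1,…,2n}`.  `gammaNN n` is the product of the
two `n`-cycles `(1,2,…,n)` and `(n+1,…,2n)`.
-/

/-- The number of cycles of a permutation, where fixed points count as cycles. -/
noncomputable def cycleCount {α : Type*} [Fintype α] [DecidableEq α]
    (σ : Equiv.Perm α) : ℕ :=
  Multiset.card σ.cycleType + (Fintype.card α - σ.support.card)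

/-- `|σ| = m - #(σ)`, the minimal number of transpositions whose product is `σ`. -/
noncomputable def permLen {α : Type*} [Fintype α] [DecidableEq α]
    (σ : Equiv.Perm α) : ℕ :=
  Fintype.card α - cycleCount σ

open Equiv Equiv.Perm Function

section Foundations

variable {α : Type*} [Fintype α] [DecidableEq α]

/-- Strict cardinality drop for a surjective non-injective map. -/
theorem natCard_lt_of_surj_not_inj {X Y : Type*} [Finite X] (f : X → Y)
    (hs : Function.Surjective f) (hni : ¬ Function.Injective f) :
    Nat.card Y < Nat.card X := by
  classical
  haveI := Fintype.ofFinite X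
  haveI : Fintype Y := Fintype.ofSurjective f hs
  simpa only [Nat.card_eq_fintype_card] using
    Fintype.card_lt_of_surjective_not_injective f hs hni

/-- The quotient by the "same cycle" relation. -/
abbrev orbQ (σ : Equiv.Perm α) := Quotient (Equiv.Perm.SameCycle.setoid σ)

abbrev orbMk (σ : Equiv.Perm α) (x : α) : orbQ σ := Quotient.mk (SameCycle.setoid σ) x

theorem orbMk_eq_iff {σ : Equiv.Perm α} {x y : α} :
    orbMk σ x = orbMk σ y ↔ σ.SameCycle x y := by
  constructor
  · intro h; exact Quotient.exact h
  · intro h; exact Quotient.sound h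

theorem sameCycle_of_fixed {σ : Equiv.Perm α} {x z : α} (hx : σ x = x)
    (h : σ.SameCycle x z) : x = z := by
  obtain ⟨i, hi⟩ := h
  rw [← hi, zpow_apply_eq_self_of_apply_eq_self hx]

/-- The bridge: `cycleCount` counts the classes of the same-cycle relation. -/
theorem cycleCount_eq_card_orbQ (σ : Equiv.Perm α) :
    cycleCount σ = Nat.card (orbQ σ) := by
  classical
  -- the lifted classification map
  have hcompat : ∀ x y : α, σ.SameCycle x y →
      (if hx : σ x = x then (Sum.inr ⟨x, by simp [hx]⟩ :
          ({c // c ∈ σ.cycleFactorsFinset} ⊕ {x // x ∈ σ.supportᶜ}))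
        else Sum.inl ⟨σ.cycleOf x, cycleOf_mem_cycleFactorsFinset_iff.mpr
          (mem_support.mpr hx)⟩) =
      (if hy : σ y = y then Sum.inr ⟨y, by simp [hy]⟩
        else Sum.inl ⟨σ.cycleOf y, cycleOf_mem_cycleFactorsFinset_iff.mpr
          (mem_support.mpr hy)⟩) := by
    intro x y hxy
    by_cases hx : σ x = x
    · have := sameCycle_of_fixed hx hxy
      subst this
      simp
    · have hy : ¬ σ y = y := by
        intro hy
        have h2 : y = x := sameCycle_of_fixed hy hxy.symm
        rw [h2] at hy
        exact hx hy
      rw [dif_neg hx, dif_neg hy]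
      exact congrArg _ (Subtype.ext hxy.cycleOf_eq)
  set F : orbQ σ → ({c // c ∈ σ.cycleFactorsFinset} ⊕ {x // x ∈ σ.supportᶜ}) :=
    Quotient.lift _ hcompat with hF
  have hkey : ∀ x y : α, F (orbMk σ x) = F (orbMk σ y) → σ.SameCycle x y := by
    intro x y hx'
    rw [hF] at hx'
    simp only [orbMk, Quotient.lift_mk] at hx'
    by_cases hx : σ x = x
    · by_cases hy : σ y = y
      · rw [dif_pos hx, dif_pos hy] at hx'
        obtain rfl : x = y := by simpa using hx'
        exact SameCycle.refl σ x
      · rw [dif_pos hx, dif_neg hy] at hx'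
        simp at hx'
    · by_cases hy : σ y = y
      · rw [dif_neg hx, dif_pos hy] at hx'
        simp at hx'
      · rw [dif_neg hx, dif_neg hy] at hx'
        have hc : σ.cycleOf x = σ.cycleOf y := by
          simpa [Subtype.ext_iff] using hx'
        have hyy : y ∈ (σ.cycleOf y).support :=
          (mem_support_cycleOf_iff' hy).mpr (SameCycle.refl σ y)
        rw [← hc] at hyy
        exact (mem_support_cycleOf_iff' hx).mp hyy
  have hbij : Function.Bijective F := by
    constructor
    · intro q1 q2
      induction q1 using Quotient.ind
      induction q2 using Quotient.ind
      intro h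
      exact Quotient.sound (hkey _ _ h)
    · rintro (⟨c, hc⟩ | ⟨x, hx⟩)
      · obtain ⟨hcyc, hmem⟩ := mem_cycleFactorsFinset_iff.mp hc
        obtain ⟨x, hx, -⟩ := hcyc
        have hxs : x ∈ c.support := mem_support.mpr hx
        have hσx : σ x ≠ x := by
          rw [← hmem x hxs]; exact hx
        refine ⟨orbMk σ x, ?_⟩
        rw [hF]
        simp only [orbMk, Quotient.lift_mk]
        rw [dif_neg hσx]
        exact congrArg _ (Subtype.ext (cycle_is_cycleOf hxs hc).symm)
      · refine ⟨orbMk σ x, ?_⟩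
        have hσx : σ x = x := by simpa using hx
        rw [hF]
        simp only [orbMk, Quotient.lift_mk]
        rw [dif_pos hσx]
  have hcard := Nat.card_eq_of_bijective F hbij
  rw [hcard, Nat.card_sum, Nat.card_eq_fintype_card, Nat.card_eq_fintype_card,
    Fintype.card_coe, Fintype.card_coe, Finset.card_compl]
  unfold cycleCount
  rw [cycleType_def, Multiset.card_map]
  rfl

end Foundations

section Engine

variable {α : Type*} [Fintype α] [DecidableEq α]

theorem sameCycle_induct (f : Equiv.Perm α) (P : α → Prop) {x z : α}
    (hstep : ∀ y, P y → P (f y)) (hx : P x) (h : f.SameCycle x z) : P z := by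
  have key : ∀ n : ℕ, P ((f ^ n) x) := by
    intro n
    induction n with
    | zero => simpa using hx
    | succ n ih =>
      rw [pow_succ', Equiv.Perm.mul_apply]
      exact hstep _ ih
  obtain ⟨i, -, hi⟩ := h.exists_pow_eq'
  rw [← hi]
  exact key i

variable {σ : Equiv.Perm α} {a b : α}

private theorem sc_step (y : α) : σ.SameCycle y (σ y) := ⟨1, by simp⟩

theorem sameCycle_swap_split (hs : σ.SameCycle a b) {x z : α}
    (h : (σ * Equiv.swap a b).SameCycle x z) : σ.SameCycle x z := by
  refine sameCycle_induct _ (fun w => σ.SameCycle x w) ?_ (SameCycle.refl σ x) h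
  intro y hy
  rcases eq_or_ne y a with rfl | hya
  · rw [Equiv.Perm.mul_apply, Equiv.swap_apply_left]
    exact (hy.trans hs).trans (sc_step b)
  rcases eq_or_ne y b with rfl | hyb
  · rw [Equiv.Perm.mul_apply, Equiv.swap_apply_right]
    exact (hy.trans hs.symm).trans (sc_step a)
  · rw [Equiv.Perm.mul_apply, Equiv.swap_apply_of_ne_of_ne hya hyb]
    exact hy.trans (sc_step y)

theorem sameCycle_swap_merge (hn : ¬ σ.SameCycle a b) :
    (σ * Equiv.swap a b).SameCycle a b := by
  classical
  have key : ∀ i : ℕ, 1 ≤ i → (∀ l : ℕ, 1 ≤ l → l < i → (σ ^ l) a ≠ a) →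
      (σ * Equiv.swap a b).SameCycle b ((σ ^ i) a) := by
    intro i
    induction i with
    | zero => intro h; omega
    | succ n ih =>
      intro _ hno
      rcases Nat.eq_zero_or_pos n with rfl | hn1
      · refine ⟨1, ?_⟩
        simp [Equiv.Perm.mul_apply, Equiv.swap_apply_right]
      · have h1 := ih hn1 (fun l hl1 hl2 => hno l hl1 (by omega))
        have hna : (σ ^ n) a ≠ a := hno n hn1 (by omega)
        have hnb : (σ ^ n) a ≠ b := fun hb => hn ⟨(n : ℤ), by rw [zpow_natCast]; exact hb⟩
        have hstep : (σ * Equiv.swap a b) ((σ ^ n) a) = (σ ^ (n + 1)) a := by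
          rw [Equiv.Perm.mul_apply, Equiv.swap_apply_of_ne_of_ne hna hnb,
            pow_succ', Equiv.Perm.mul_apply]
        exact h1.trans ⟨1, by simpa using hstep⟩
  have hex : ∃ j : ℕ, 0 < j ∧ (σ ^ j) a = a :=
    ⟨orderOf σ, orderOf_pos σ, by rw [pow_orderOf_eq_one]; rfl⟩
  have hj := Nat.find_spec hex
  have hres := key (Nat.find hex) hj.1
    (fun l hl1 hl2 heq => Nat.find_min hex hl2 ⟨hl1, heq⟩)
  rw [hj.2] at hres
  exact hres.symm

theorem sameCycle_swap_of_sameCycle (hn : ¬ σ.SameCycle a b) {x z : α}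
    (h : σ.SameCycle x z) : (σ * Equiv.swap a b).SameCycle x z := by
  refine sameCycle_induct σ (fun w => (σ * Equiv.swap a b).SameCycle x w) ?_
    (SameCycle.refl _ x) h
  intro y hy
  rcases eq_or_ne y a with rfl | hya
  · exact (hy.trans (sameCycle_swap_merge hn)).trans
      ⟨1, by simp [Equiv.Perm.mul_apply, Equiv.swap_apply_right]⟩
  rcases eq_or_ne y b with rfl | hyb
  · exact (hy.trans (sameCycle_swap_merge hn).symm).trans
      ⟨1, by simp [Equiv.Perm.mul_apply, Equiv.swap_apply_left]⟩
  · exact hy.trans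
      ⟨1, by simp [Equiv.Perm.mul_apply, Equiv.swap_apply_of_ne_of_ne hya hyb]⟩

theorem sameCycle_swap_char (hn : ¬ σ.SameCycle a b) {x z : α}
    (h : (σ * Equiv.swap a b).SameCycle x z) :
    σ.SameCycle x z ∨ (σ.SameCycle x a ∧ σ.SameCycle b z) ∨
      (σ.SameCycle x b ∧ σ.SameCycle a z) := by
  refine sameCycle_induct _ (fun w => σ.SameCycle x w ∨ (σ.SameCycle x a ∧ σ.SameCycle b w) ∨
      (σ.SameCycle x b ∧ σ.SameCycle a w)) ?_ (Or.inl (SameCycle.refl σ x)) h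
  intro y hy
  rcases eq_or_ne y a with rfl | hya
  · rw [Equiv.Perm.mul_apply, Equiv.swap_apply_left]
    rcases hy with h1 | ⟨h1, h2⟩ | ⟨h1, h2⟩
    · exact Or.inr (Or.inl ⟨h1, sc_step b⟩)
    · exact absurd h2.symm hn
    · exact Or.inl (h1.trans (sc_step b))
  rcases eq_or_ne y b with rfl | hyb
  · rw [Equiv.Perm.mul_apply, Equiv.swap_apply_right]
    rcases hy with h1 | ⟨h1, h2⟩ | ⟨h1, h2⟩
    · exact Or.inr (Or.inr ⟨h1, sc_step a⟩)
    · exact Or.inl (h1.trans (sc_step a))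
    · exact absurd h2 hn
  · rw [Equiv.Perm.mul_apply, Equiv.swap_apply_of_ne_of_ne hya hyb]
    rcases hy with h1 | ⟨h1, h2⟩ | ⟨h1, h2⟩
    · exact Or.inl (h1.trans (sc_step y))
    · exact Or.inr (Or.inl ⟨h1, h2.trans (sc_step y)⟩)
    · exact Or.inr (Or.inr ⟨h1, h2.trans (sc_step y)⟩)

theorem cycleCount_mul_swap_lt (hn : ¬ σ.SameCycle a b) :
    cycleCount (σ * Equiv.swap a b) < cycleCount σ := by
  rw [cycleCount_eq_card_orbQ, cycleCount_eq_card_orbQ]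
  have hcompat : ∀ x y : α, σ.SameCycle x y →
      orbMk (σ * Equiv.swap a b) x = orbMk (σ * Equiv.swap a b) y :=
    fun x y h => Quotient.sound (sameCycle_swap_of_sameCycle hn h)
  apply natCard_lt_of_surj_not_inj (Quotient.lift (fun x => orbMk (σ * Equiv.swap a b) x) hcompat)
  · intro q
    induction q using Quotient.ind with
    | _ x => exact ⟨orbMk σ x, rfl⟩
  · intro hinj
    have h1 : orbMk (σ * Equiv.swap a b) a = orbMk (σ * Equiv.swap a b) b :=
      Quotient.sound (sameCycle_swap_merge hn)
    have h2 : orbMk σ a = orbMk σ b := hinj h1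
    exact hn (orbMk_eq_iff.mp h2)

theorem cycleCount_mul_swap_le (hab : a ≠ b) :
    cycleCount (σ * Equiv.swap a b) ≤ cycleCount σ + 1 := by
  classical
  have htt : σ * Equiv.swap a b * Equiv.swap a b = σ := by
    rw [mul_assoc, Equiv.swap_mul_self, mul_one]
  by_cases hc : (σ * Equiv.swap a b).SameCycle a b
  · -- `σ`-classes refine `σ * t`-classes; surjection gives the bound
    have himp : ∀ x z : α, σ.SameCycle x z → (σ * Equiv.swap a b).SameCycle x z := by
      intro x z h
      exact sameCycle_swap_split hc (by rw [htt]; exact h)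
    have hcompat : ∀ x y : α, σ.SameCycle x y →
        orbMk (σ * Equiv.swap a b) x = orbMk (σ * Equiv.swap a b) y :=
      fun x y h => Quotient.sound (himp _ _ h)
    have hle : Nat.card (orbQ (σ * Equiv.swap a b)) ≤ Nat.card (orbQ σ) := by
      apply Nat.card_le_card_of_surjective
        (Quotient.lift (fun x => orbMk (σ * Equiv.swap a b) x) hcompat)
      intro q
      induction q using Quotient.ind with
      | _ x => exact ⟨orbMk σ x, rfl⟩
    rw [cycleCount_eq_card_orbQ, cycleCount_eq_card_orbQ]
    omega
  · -- injection into `orbQ σ ⊕ Unit`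
    have hS2 : ∀ x z : α, (σ * Equiv.swap a b).SameCycle x z → σ.SameCycle x z := by
      intro x z h
      have := sameCycle_swap_of_sameCycle hc h
      rwa [htt] at this
    have hS3 : ∀ x z : α, σ.SameCycle x z →
        (σ * Equiv.swap a b).SameCycle x z ∨
          ((σ * Equiv.swap a b).SameCycle x a ∧ (σ * Equiv.swap a b).SameCycle b z) ∨
          ((σ * Equiv.swap a b).SameCycle x b ∧ (σ * Equiv.swap a b).SameCycle a z) := by
      intro x z h
      exact sameCycle_swap_char hc (by rw [htt]; exact h)
    have hcompat : ∀ x y : α, (σ * Equiv.swap a b).SameCycle x y →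
        (if (σ * Equiv.swap a b).SameCycle x b then (Sum.inr () : orbQ σ ⊕ Unit)
          else Sum.inl (orbMk σ x)) =
        (if (σ * Equiv.swap a b).SameCycle y b then (Sum.inr () : orbQ σ ⊕ Unit)
          else Sum.inl (orbMk σ y)) := by
      intro x y h
      by_cases hxb : (σ * Equiv.swap a b).SameCycle x b
      · rw [if_pos hxb, if_pos (h.symm.trans hxb)]
      · have hyb : ¬ (σ * Equiv.swap a b).SameCycle y b := fun hy => hxb (h.trans hy)
        rw [if_neg hxb, if_neg hyb]
        exact congrArg _ (Quotient.sound (hS2 _ _ h))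
    have hinj : Function.Injective (Quotient.lift _ hcompat :
        orbQ (σ * Equiv.swap a b) → orbQ σ ⊕ Unit) := by
      intro q1 q2
      induction q1 using Quotient.ind with
      | _ x =>
      induction q2 using Quotient.ind with
      | _ y =>
      intro h
      have h' : (if (σ * Equiv.swap a b).SameCycle x b then (Sum.inr () : orbQ σ ⊕ Unit)
          else Sum.inl (orbMk σ x)) =
          (if (σ * Equiv.swap a b).SameCycle y b then (Sum.inr () : orbQ σ ⊕ Unit)
          else Sum.inl (orbMk σ y)) := h
      by_cases hxb : (σ * Equiv.swap a b).SameCycle x b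
      · by_cases hyb : (σ * Equiv.swap a b).SameCycle y b
        · exact Quotient.sound (hxb.trans hyb.symm)
        · rw [if_pos hxb, if_neg hyb] at h'
          exact absurd h' (by simp)
      · by_cases hyb : (σ * Equiv.swap a b).SameCycle y b
        · rw [if_neg hxb, if_pos hyb] at h'
          exact absurd h' (by simp)
        · rw [if_neg hxb, if_neg hyb] at h'
          have hxy : σ.SameCycle x y := orbMk_eq_iff.mp (Sum.inl_injective h')
          rcases hS3 _ _ hxy with h1 | ⟨h1, h2⟩ | ⟨h1, h2⟩
          · exact Quotient.sound h1
          · exact absurd h2.symm hyb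
          · exact absurd h1 hxb
    have hle := Nat.card_le_card_of_injective _ hinj
    rw [cycleCount_eq_card_orbQ, cycleCount_eq_card_orbQ]
    rw [Nat.card_sum] at hle
    simpa using hle

theorem cycleCount_one' : cycleCount (1 : Equiv.Perm α) = Fintype.card α := by
  unfold cycleCount
  simp

theorem cycleCount_le_card (σ : Equiv.Perm α) : cycleCount σ ≤ Fintype.card α := by
  rw [cycleCount_eq_card_orbQ, ← Nat.card_eq_fintype_card]
  exact Nat.card_le_card_of_surjective (fun x => orbMk σ x) (by
    intro q
    induction q using Quotient.ind with
    | _ x => exact ⟨x, rfl⟩)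

theorem cycleCount_lt_card_of_ne_one (hσ : σ ≠ 1) : cycleCount σ < Fintype.card α := by
  rw [cycleCount_eq_card_orbQ, ← Nat.card_eq_fintype_card]
  have hex : ∃ x : α, σ x ≠ x := by
    by_contra h
    push_neg at h
    exact hσ (Equiv.ext fun x => by simpa using h x)
  obtain ⟨x, hx⟩ := hex
  apply natCard_lt_of_surj_not_inj (fun y => orbMk σ y)
  · intro q
    induction q using Quotient.ind with
    | _ y => exact ⟨y, rfl⟩
  · intro hinj
    exact hx (hinj (Quotient.sound (sc_step x) : orbMk σ x = orbMk σ (σ x))).symm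

theorem cycleCount_mul_swap_inv_fix (ha : σ a ≠ a) :
    cycleCount (σ * Equiv.swap a (σ⁻¹ a)) = cycleCount σ + 1 := by
  have hab : a ≠ σ⁻¹ a := fun h => ha ((Equiv.Perm.inv_eq_iff_eq.mp h.symm).symm)
  have hfix : (σ * Equiv.swap a (σ⁻¹ a)) a = a := by
    rw [Equiv.Perm.mul_apply, Equiv.swap_apply_left, ← Equiv.Perm.mul_apply, mul_inv_cancel,
    Equiv.Perm.one_apply]
  have hn : ¬ (σ * Equiv.swap a (σ⁻¹ a)).SameCycle a (σ⁻¹ a) :=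
    fun h => hab (sameCycle_of_fixed hfix h)
  have htt : σ * Equiv.swap a (σ⁻¹ a) * Equiv.swap a (σ⁻¹ a) = σ := by
    rw [mul_assoc, Equiv.swap_mul_self, mul_one]
  have hlt := cycleCount_mul_swap_lt hn
  rw [htt] at hlt
  have hle := cycleCount_mul_swap_le (σ := σ) hab
  omega

end Engine

section Factorization

variable {α : Type*} [Fintype α] [DecidableEq α]

theorem permLen_one : permLen (1 : Equiv.Perm α) = 0 := by
  unfold permLen
  rw [cycleCount_one']
  omega

theorem eq_one_of_permLen_eq_zero {σ : Equiv.Perm α} (h : permLen σ = 0) : σ = 1 := by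
  by_contra h1
  have := cycleCount_lt_card_of_ne_one h1
  unfold permLen at h
  omega

theorem exists_swap_list_aux : ∀ (m : ℕ) (σ : Equiv.Perm α), permLen σ ≤ m →
    ∃ l : List (Equiv.Perm α), (∀ t ∈ l, ∃ x y : α, x ≠ y ∧ t = Equiv.swap x y) ∧
      l.prod = σ ∧ l.length = permLen σ := by
  intro m
  induction m with
  | zero =>
    intro σ hσ
    have h1 : σ = 1 := eq_one_of_permLen_eq_zero (Nat.le_zero.mp hσ)
    subst h1
    exact ⟨[], by simp, by simp, by simp [permLen_one]⟩
  | succ m ih =>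
    intro σ hσ
    by_cases h1 : σ = 1
    · subst h1
      exact ⟨[], by simp, by simp, by simp [permLen_one]⟩
    · have hex : ∃ a : α, σ a ≠ a := by
        by_contra h
        push_neg at h
        exact h1 (Equiv.ext fun x => by simpa using h x)
      obtain ⟨a, ha⟩ := hex
      have hcc : cycleCount (σ * Equiv.swap a (σ⁻¹ a)) = cycleCount σ + 1 :=
        cycleCount_mul_swap_inv_fix ha
      have hlt : cycleCount σ < Fintype.card α := cycleCount_lt_card_of_ne_one h1
      have hlen' : permLen (σ * Equiv.swap a (σ⁻¹ a)) = permLen σ - 1 ∧ 1 ≤ permLen σ := by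
        unfold permLen
        omega
      obtain ⟨l, hl, hp, hle⟩ := ih (σ * Equiv.swap a (σ⁻¹ a)) (by omega)
      refine ⟨l ++ [Equiv.swap a (σ⁻¹ a)], ?_, ?_, ?_⟩
      · intro t ht
        rcases List.mem_append.mp ht with h | h
        · exact hl t h
        · refine ⟨a, σ⁻¹ a, fun h' => ha ((Equiv.Perm.inv_eq_iff_eq.mp h'.symm).symm), ?_⟩
          simpa using h
      · rw [List.prod_append, List.prod_singleton, hp, mul_assoc, Equiv.swap_mul_self,
          mul_one]
      · rw [List.length_append, List.length_singleton, hle]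
        omega

theorem exists_swap_list (σ : Equiv.Perm α) :
    ∃ l : List (Equiv.Perm α), (∀ t ∈ l, ∃ x y : α, x ≠ y ∧ t = Equiv.swap x y) ∧
      l.prod = σ ∧ l.length = permLen σ :=
  exists_swap_list_aux (permLen σ) σ le_rfl

theorem cycleCount_swap_mul_le (τ : Equiv.Perm α) {x y : α} (hxy : x ≠ y) :
    cycleCount (Equiv.swap x y * τ) ≤ cycleCount τ + 1 := by
  rw [Equiv.swap_mul_eq_mul_swap]
  exact cycleCount_mul_swap_le (fun h => hxy (by
    have := congrArg τ h
    simpa using this))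

theorem permLen_prod_swaps_le (l : List (Equiv.Perm α))
    (hl : ∀ t ∈ l, ∃ x y : α, x ≠ y ∧ t = Equiv.swap x y) :
    permLen l.prod ≤ l.length := by
  induction l with
  | nil => simp [permLen_one]
  | cons t l ih =>
    obtain ⟨x, y, hxy, rfl⟩ := hl t List.mem_cons_self
    rw [List.prod_cons]
    have h1 : cycleCount l.prod ≤ cycleCount (Equiv.swap x y * l.prod) + 1 := by
      have h2 := cycleCount_swap_mul_le (Equiv.swap x y * l.prod) hxy
      rw [← mul_assoc, Equiv.swap_mul_self, one_mul] at h2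
      exact h2
    have h3 := ih (fun t ht => hl t (List.mem_cons_of_mem _ ht))
    have h4 := cycleCount_le_card (Equiv.swap x y * l.prod)
    unfold permLen at *
    rw [List.length_cons]
    omega

theorem permLen_mul_le (σ τ : Equiv.Perm α) : permLen (σ * τ) ≤ permLen σ + permLen τ := by
  obtain ⟨l1, hl1, hp1, hn1⟩ := exists_swap_list σ
  obtain ⟨l2, hl2, hp2, hn2⟩ := exists_swap_list τ
  have := permLen_prod_swaps_le (l1 ++ l2) (fun t ht => by
    rcases List.mem_append.mp ht with h | h
    · exact hl1 t h
    · exact hl2 t h)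
  rw [List.prod_append, hp1, hp2, List.length_append, hn1, hn2] at this
  exact this

theorem cycleCount_inv (σ : Equiv.Perm α) : cycleCount σ⁻¹ = cycleCount σ := by
  unfold cycleCount
  rw [Equiv.Perm.cycleType_inv, Equiv.Perm.support_inv]

theorem permLen_inv (σ : Equiv.Perm α) : permLen σ⁻¹ = permLen σ := by
  unfold permLen
  rw [cycleCount_inv]

theorem cycleCount_conj (g σ : Equiv.Perm α) :
    cycleCount (g * σ * g⁻¹) = cycleCount σ := by
  unfold cycleCount
  rw [Equiv.Perm.cycleType_conj, Equiv.Perm.card_support_conj]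

theorem permLen_conj (g σ : Equiv.Perm α) : permLen (g * σ * g⁻¹) = permLen σ := by
  unfold permLen
  rw [cycleCount_conj]

/-- `|B * A⁻¹| = |A⁻¹ * B|`. -/
theorem permLen_mul_comm (A B : Equiv.Perm α) : permLen (B * A⁻¹) = permLen (A⁻¹ * B) := by
  have h : A * (A⁻¹ * B) * A⁻¹ = B * A⁻¹ := by
    rw [mul_inv_cancel_left]
  rw [← h, permLen_conj]

end Factorization

section Master

theorem sum_special {k : ℕ} (s : Finset (Fin k)) (f g : Fin k → ℤ) (c : ℤ)
    (h : ∀ i ∈ s, f i ≤ g i) {i0 : Fin k} (hi0 : i0 ∈ s) (h0 : f i0 + c ≤ g i0) :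
    s.sum f + c ≤ s.sum g := by
  classical
  rw [← Finset.sum_erase_add _ _ hi0, ← Finset.sum_erase_add _ g hi0]
  have h1 : ∑ i ∈ s.erase i0, f i ≤ ∑ i ∈ s.erase i0, g i :=
    Finset.sum_le_sum (fun i hi => h i (Finset.mem_of_mem_erase hi))
  linarith

theorem sum_pairs {k : ℕ} (g : Fin k → Fin k → ℤ) (hdiag : ∀ i, g i i = 0) :
    ∑ i, ∑ j, g i j = ∑ i, ∑ j, (if i < j then g i j + g j i else 0) := by
  have key : ∀ i j : Fin k, g i j =
      (if i < j then g i j else 0) + (if j < i then g i j else 0) := by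
    intro i j
    rcases lt_trichotomy i j with h | h | h
    · rw [if_pos h, if_neg (asymm h), add_zero]
    · subst h
      simp [hdiag, lt_irrefl]
    · rw [if_neg (asymm h), if_pos h, zero_add]
  have step1 : ∑ i, ∑ j, g i j =
      (∑ i, ∑ j, (if i < j then g i j else 0)) + ∑ i, ∑ j, (if j < i then g i j else 0) := by
    rw [← Finset.sum_add_distrib]
    apply Finset.sum_congr rfl
    intro i _
    rw [← Finset.sum_add_distrib]
    apply Finset.sum_congr rfl
    intro j _
    exact key i j
  have step2 : ∑ i, ∑ j, (if j < i then g i j else 0) =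
      ∑ i, ∑ j, (if i < j then g j i else 0) := Finset.sum_comm
  rw [step1, step2, ← Finset.sum_add_distrib]
  apply Finset.sum_congr rfl
  intro i _
  rw [← Finset.sum_add_distrib]
  apply Finset.sum_congr rfl
  intro j _
  split <;> simp

theorem master {k : ℕ} (M : ℤ) (hM : 0 ≤ M)
    (s t : Fin k → ℤ) (e : Fin k → Fin k → ℤ) (q U V : Fin k → ℤ)
    (W : Fin k → Fin k → ℤ) (istar : Fin k)
    (hs : ∀ i, 0 ≤ s i) (ht : ∀ i, 0 ≤ t i)
    (he0 : ∀ i j, 0 ≤ e i j)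
    (hq0 : ∀ i, 0 ≤ q i)
    (hU : ∀ i, q i ≤ U i)
    (hV1 : ∀ i, M ≤ q i + V i)
    (hV2 : ∀ i, q i ≤ M + V i)
    (hW : ∀ i j, i ≠ j → q i - q j ≤ W i j ∧ q j - q i ≤ W i j)
    (hst : ∀ i, 1 ≤ s i + t i)
    (hgen : M + 2 ≤ q istar + V istar)
    (htpos : 1 ≤ t istar)
    (hj0 : ∃ j, j ≠ istar ∧ 1 ≤ e istar j ∧ 1 ≤ e j istar) :
    ((∑ i, (s i * min (q i) M + t i * (M - min (q i) M)))
        + ∑ i, ∑ j, (if i < j then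
            e i j * (max (min (q j) M - min (q i) M) 0 + max (min (q i) M - min (q j) M) 0)
          else 0)) + 2
      ≤ (∑ i, (s i * U i + t i * V i)) + ∑ i, ∑ j, (if i < j then e i j * W i j else 0) := by
  classical
  -- pointwise bounds for the s,t part
  have hf : ∀ i : Fin k, s i * min (q i) M + t i * (M - min (q i) M) ≤
      s i * U i + t i * V i := by
    intro i
    have h1 : min (q i) M ≤ U i := le_trans (min_le_left _ _) (hU i)
    have h2 : M - min (q i) M ≤ V i := by
      have := hV1 i
      have := hV2 i
      omega
    have := mul_le_mul_of_nonneg_left h1 (hs i)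
    have := mul_le_mul_of_nonneg_left h2 (ht i)
    linarith
  -- pointwise bounds for the e part
  have hepair : ∀ i j : Fin k,
      (if i < j then
        e i j * (max (min (q j) M - min (q i) M) 0 + max (min (q i) M - min (q j) M) 0)
      else 0) ≤ (if i < j then e i j * W i j else 0) := by
    intro i j
    by_cases hij : i < j
    · rw [if_pos hij, if_pos hij]
      obtain ⟨hw1, hw2⟩ := hW i j (ne_of_lt hij)
      have harg : max (min (q j) M - min (q i) M) 0 + max (min (q i) M - min (q j) M) 0
          ≤ W i j := by omega
      exact mul_le_mul_of_nonneg_left harg (he0 i j)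
    · rw [if_neg hij, if_neg hij]
  have hesum : (∑ i, ∑ j, (if i < j then
        e i j * (max (min (q j) M - min (q i) M) 0 + max (min (q i) M - min (q j) M) 0)
      else 0)) ≤ ∑ i, ∑ j, (if i < j then e i j * W i j else 0) :=
    Finset.sum_le_sum (fun i _ => Finset.sum_le_sum (fun j _ => hepair i j))
  -- slack at a capped index
  have cap_slack : ∀ i : Fin k, M < q i →
      s i * min (q i) M + t i * (M - min (q i) M) + 1 ≤ s i * U i + t i * V i := by
    intro i hqi
    have h1 : M + 1 ≤ U i := by
      have := hU i
      omega
    have h2 : 1 ≤ V i := by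
      have := hV2 i
      omega
    have hmin : min (q i) M = M := by omega
    rw [hmin, sub_self, mul_zero, add_zero]
    have e1 : s i * (M + 1) ≤ s i * U i := mul_le_mul_of_nonneg_left h1 (hs i)
    have e2 : t i * 1 ≤ t i * V i := mul_le_mul_of_nonneg_left h2 (ht i)
    have e3 : s i * (M + 1) = s i * M + s i := by ring
    have e4 : t i * 1 = t i := by ring
    have := hst i
    linarith
  by_cases hcap : q istar ≤ M
  · -- genus slack of 2 at `istar` in the s,t-part
    have hfstar : s istar * min (q istar) M + t istar * (M - min (q istar) M) + 2 ≤
        s istar * U istar + t istar * V istar := by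
      have h1 : min (q istar) M ≤ U istar := le_trans (min_le_left _ _) (hU istar)
      have h2 : M - min (q istar) M + 2 ≤ V istar := by
        have := hV2 istar
        omega
      have e1 := mul_le_mul_of_nonneg_left h1 (hs istar)
      have e2 := mul_le_mul_of_nonneg_left h2 (ht istar)
      have e3 : t istar * (M - min (q istar) M + 2) =
          t istar * (M - min (q istar) M) + 2 * t istar := by ring
      linarith
    have hsum := sum_special Finset.univ
      (fun i => s i * min (q i) M + t i * (M - min (q i) M))
      (fun i => s i * U i + t i * V i) 2 (fun i _ => hf i) (Finset.mem_univ istar) hfstar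
    linarith [hesum, hsum]
  · push_neg at hcap
    obtain ⟨j0, hj0ne, hej1, hej2⟩ := hj0
    have hfstar1 := cap_slack istar hcap
    have hsum1 := sum_special Finset.univ
      (fun i => s i * min (q i) M + t i * (M - min (q i) M))
      (fun i => s i * U i + t i * V i) 1 (fun i _ => hf i) (Finset.mem_univ istar) hfstar1
    by_cases hcap2 : M < q j0
    · -- both capped: extra slack 1 at j0
      have hfstar2 := cap_slack j0 hcap2
      have hmem : istar ∈ Finset.univ.erase j0 :=
        Finset.mem_erase.mpr ⟨(Ne.symm hj0ne), Finset.mem_univ istar⟩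
      have hsum2 := sum_special (Finset.univ.erase j0)
        (fun i => s i * min (q i) M + t i * (M - min (q i) M))
        (fun i => s i * U i + t i * V i) 1 (fun i _ => hf i) hmem hfstar1
      have hrw1 : (∑ i ∈ Finset.univ.erase j0, (s i * min (q i) M + t i * (M - min (q i) M)))
          + (s j0 * min (q j0) M + t j0 * (M - min (q j0) M))
          = ∑ i, (s i * min (q i) M + t i * (M - min (q i) M)) :=
        Finset.sum_erase_add _ _ (Finset.mem_univ j0)
      have hrw2 : (∑ i ∈ Finset.univ.erase j0, (s i * U i + t i * V i))
          + (s j0 * U j0 + t j0 * V j0) = ∑ i, (s i * U i + t i * V i) :=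
        Finset.sum_erase_add _ _ (Finset.mem_univ j0)
      linarith [hesum, hsum2, hfstar2, hrw1, hrw2]
    · -- e-slack at the pair {istar, j0}
      push_neg at hcap2
      -- the sorted pair
      have e_slack : ∀ a b : Fin k, a < b → 1 ≤ e a b →
          (M < q a ∧ q b ≤ M) ∨ (M < q b ∧ q a ≤ M) →
          (if a < b then
            e a b * (max (min (q b) M - min (q a) M) 0 + max (min (q a) M - min (q b) M) 0)
          else 0) + 1 ≤ (if a < b then e a b * W a b else 0) := by
        intro a b hab hea hcase
        rw [if_pos hab, if_pos hab]
        obtain ⟨hw1, hw2⟩ := hW a b (ne_of_lt hab)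
        have harg : max (min (q b) M - min (q a) M) 0 + max (min (q a) M - min (q b) M) 0 + 1
            ≤ W a b := by omega
        have e1 := mul_le_mul_of_nonneg_left harg (he0 a b)
        have e2 : e a b * (max (min (q b) M - min (q a) M) 0 +
            max (min (q a) M - min (q b) M) 0 + 1) =
            e a b * (max (min (q b) M - min (q a) M) 0 +
              max (min (q a) M - min (q b) M) 0) + e a b := by ring
        linarith
      have hepairsum : (∑ i, ∑ j, (if i < j then
            e i j * (max (min (q j) M - min (q i) M) 0 + max (min (q i) M - min (q j) M) 0)
          else 0)) + 1 ≤ ∑ i, ∑ j, (if i < j then e i j * W i j else 0) := by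
        rcases lt_or_gt_of_ne hj0ne with hlt | hlt
        · -- j0 < istar : sorted pair (j0, istar)
          have hsp := e_slack j0 istar hlt hej2 (Or.inr ⟨hcap, hcap2⟩)
          have hinner := sum_special Finset.univ
            (fun j => if j0 < j then
              e j0 j * (max (min (q j) M - min (q j0) M) 0 +
                max (min (q j0) M - min (q j) M) 0) else 0)
            (fun j => if j0 < j then e j0 j * W j0 j else 0) 1
            (fun j _ => hepair j0 j) (Finset.mem_univ istar) hsp
          exact sum_special Finset.univ _ _ 1
            (fun i _ => Finset.sum_le_sum (fun j _ => hepair i j))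
            (Finset.mem_univ j0) hinner
        · -- istar < j0 : sorted pair (istar, j0)
          have hsp := e_slack istar j0 hlt hej1 (Or.inl ⟨hcap, hcap2⟩)
          have hinner := sum_special Finset.univ
            (fun j => if istar < j then
              e istar j * (max (min (q j) M - min (q istar) M) 0 +
                max (min (q istar) M - min (q j) M) 0) else 0)
            (fun j => if istar < j then e istar j * W istar j else 0) 1
            (fun j _ => hepair istar j) (Finset.mem_univ j0) hsp
          exact sum_special Finset.univ _ _ 1
            (fun i _ => Finset.sum_le_sum (fun j _ => hepair i j))
            (Finset.mem_univ istar) hinner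
      linarith [hsum1, hepairsum]

end Master


/-- `γ_{n,n}`: the product of the two `n`-cycles `(1,…,n)` and `(n+1,…,2n)`. -/
def gammaNN (n : ℕ) : Equiv.Perm (Fin n ⊕ Fin n) :=
  Equiv.sumCongr (finRotate n) (finRotate n)

/-- A permutation of `{1,…,2n}` is connected if some cycle of it contains both an
element of `{1,…,n}` and an element of `{n+1,…,2n}`. -/
def IsConnectedPerm {n : ℕ} (β : Equiv.Perm (Fin n ⊕ Fin n)) : Prop :=
  ∃ a b : Fin n, β.SameCycle (Sum.inl a) (Sum.inr b)

section Gamma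

theorem gammaNN_eq_hom (n : ℕ) :
    gammaNN n = Equiv.Perm.sumCongrHom (Fin n) (Fin n) (finRotate n, finRotate n) := rfl

theorem gammaNN_zpow (n : ℕ) (i : ℤ) :
    (gammaNN n) ^ i = Equiv.sumCongr ((finRotate n) ^ i) ((finRotate n) ^ i) := by
  rw [gammaNN_eq_hom, ← map_zpow]
  rfl

theorem gammaNN_zpow_inl (n : ℕ) (i : ℤ) (a : Fin n) :
    ((gammaNN n) ^ i) (Sum.inl a) = Sum.inl (((finRotate n) ^ i) a) := by
  rw [gammaNN_zpow]
  rfl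

theorem not_connected_gammaNN (n : ℕ) : ¬ IsConnectedPerm (gammaNN n) := by
  rintro ⟨a, b, i, hi⟩
  rw [gammaNN_zpow_inl] at hi
  exact Sum.inl_ne_inr hi

open Fin.NatCast in
theorem finRotate_pow_apply (n : ℕ) (k : ℕ) (a : Fin (n + 1)) :
    ((finRotate (n + 1)) ^ k) a = a + (k : Fin (n + 1)) := by
  induction k with
  | zero => simp
  | succ m ih =>
    rw [pow_succ', Equiv.Perm.mul_apply, ih, finRotate_succ_apply]
    push_cast
    exact add_assoc _ _ _

theorem finRotate_sameCycle {n : ℕ} (a a' : Fin (n + 1)) :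
    (finRotate (n + 1)).SameCycle a a' := by
  refine ⟨((a' - a : Fin (n + 1)) : ℕ), ?_⟩
  rw [zpow_natCast, finRotate_pow_apply, Fin.cast_val_eq_self, add_sub_cancel]

theorem gammaNN_sameCycle_inl {n : ℕ} (a a' : Fin (n + 1)) :
    (gammaNN (n + 1)).SameCycle (Sum.inl a) (Sum.inl a') := by
  obtain ⟨i, hi⟩ := finRotate_sameCycle a a'
  exact ⟨i, by rw [gammaNN_zpow_inl, hi]⟩

theorem gammaNN_zpow_inr (n : ℕ) (i : ℤ) (a : Fin n) :
    ((gammaNN n) ^ i) (Sum.inr a) = Sum.inr (((finRotate n) ^ i) a) := by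
  rw [gammaNN_zpow]
  rfl

theorem gammaNN_sameCycle_inr {n : ℕ} (a a' : Fin (n + 1)) :
    (gammaNN (n + 1)).SameCycle (Sum.inr a) (Sum.inr a') := by
  obtain ⟨i, hi⟩ := finRotate_sameCycle a a'
  exact ⟨i, by rw [gammaNN_zpow_inr, hi]⟩

theorem cycleCount_gammaNN (n : ℕ) : cycleCount (gammaNN (n + 1)) = 2 := by
  rw [cycleCount_eq_card_orbQ]
  have hcompat : ∀ x y : Fin (n + 1) ⊕ Fin (n + 1),
      (gammaNN (n + 1)).SameCycle x y → x.isLeft = y.isLeft := by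
    rintro x y ⟨i, hi⟩
    rcases x with a | a
    · rw [gammaNN_zpow_inl] at hi
      rw [← hi]
      simp
    · rw [gammaNN_zpow_inr] at hi
      rw [← hi]
      simp
  have hbij : Function.Bijective
      (Quotient.lift (fun x : Fin (n + 1) ⊕ Fin (n + 1) => x.isLeft) hcompat :
        orbQ (gammaNN (n + 1)) → Bool) := by
    constructor
    · intro q1 q2
      induction q1 using Quotient.ind with
      | _ x =>
      induction q2 using Quotient.ind with
      | _ y =>
      intro h
      have h' : x.isLeft = y.isLeft := h
      rcases x with a | a <;> rcases y with b | b <;> simp at h'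
      · exact Quotient.sound (gammaNN_sameCycle_inl a b)
      · exact Quotient.sound (gammaNN_sameCycle_inr a b)
    · intro b
      rcases b with _ | _
      · exact ⟨orbMk _ (Sum.inr 0), rfl⟩
      · exact ⟨orbMk _ (Sum.inl 0), rfl⟩
  rw [Nat.card_eq_of_bijective _ hbij]
  simp

theorem card_sum_fin (n : ℕ) : Fintype.card (Fin n ⊕ Fin n) = 2 * n := by
  simp [two_mul]

theorem permLen_gammaNN (n : ℕ) (hn : 1 ≤ n) : permLen (gammaNN n) = 2 * n - 2 := by
  obtain ⟨m, rfl⟩ : ∃ m, n = m + 1 := ⟨n - 1, by omega⟩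
  unfold permLen
  rw [cycleCount_gammaNN, card_sum_fin]

open scoped Classical in
noncomputable def phiC {n : ℕ} (σ : Equiv.Perm (Fin n ⊕ Fin n)) : ℕ :=
  cycleCount σ + (if IsConnectedPerm σ then 2 else 0)

theorem phiC_conn {n : ℕ} {σ : Equiv.Perm (Fin n ⊕ Fin n)} (h : IsConnectedPerm σ) :
    phiC σ = cycleCount σ + 2 := by
  unfold phiC
  rw [if_pos h]

theorem phiC_nconn {n : ℕ} {σ : Equiv.Perm (Fin n ⊕ Fin n)} (h : ¬ IsConnectedPerm σ) :
    phiC σ = cycleCount σ := by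
  unfold phiC
  rw [if_neg h]
  omega

theorem phiC_ge (n : ℕ) (σ : Equiv.Perm (Fin n ⊕ Fin n)) : cycleCount σ ≤ phiC σ := by
  unfold phiC
  split <;> omega

theorem phi_step {n : ℕ} (σ : Equiv.Perm (Fin n ⊕ Fin n)) {a b : Fin n ⊕ Fin n}
    (hab : a ≠ b) :
    phiC (σ * Equiv.swap a b) ≤ phiC σ + 1 := by
  by_cases hm' : IsConnectedPerm (σ * Equiv.swap a b)
  · by_cases hm : IsConnectedPerm σ
    · have := cycleCount_mul_swap_le (σ := σ) hab
      rw [phiC_conn hm', phiC_conn hm]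
      omega
    · have hn : ¬ σ.SameCycle a b := by
        intro hs
        obtain ⟨u, v, huv⟩ := hm'
        exact hm ⟨u, v, sameCycle_swap_split hs huv⟩
      have := cycleCount_mul_swap_lt hn
      rw [phiC_conn hm', phiC_nconn hm]
      omega
  · have h1 := cycleCount_mul_swap_le (σ := σ) hab
    have h2 := phiC_ge n σ
    rw [phiC_nconn hm']
    omega

theorem phi_prod {n : ℕ} (l : List (Equiv.Perm (Fin n ⊕ Fin n)))
    (hl : ∀ t ∈ l, ∃ x y : Fin n ⊕ Fin n, x ≠ y ∧ t = Equiv.swap x y) :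
    ∀ ρ : Equiv.Perm (Fin n ⊕ Fin n), phiC (ρ * l.prod) ≤ phiC ρ + l.length := by
  induction l with
  | nil =>
    intro ρ
    simp
  | cons t l ih =>
    intro ρ
    obtain ⟨x, y, hxy, rfl⟩ := hl t List.mem_cons_self
    rw [List.prod_cons, ← mul_assoc]
    have h1 := ih (fun t ht => hl t (List.mem_cons_of_mem _ ht)) (ρ * Equiv.swap x y)
    have h2 := phi_step ρ hxy
    rw [List.length_cons]
    omega

theorem genus_connected {n : ℕ} (hn : 1 ≤ n) {C : Equiv.Perm (Fin n ⊕ Fin n)}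
    (hC : IsConnectedPerm C) :
    2 * n ≤ permLen ((gammaNN n)⁻¹ * C) + permLen C := by
  obtain ⟨m, rfl⟩ : ∃ m, n = m + 1 := ⟨n - 1, by omega⟩
  obtain ⟨l, hl, hp, hlen⟩ := exists_swap_list ((gammaNN (m + 1))⁻¹ * C)
  have hprod : gammaNN (m + 1) * l.prod = C := by
    rw [hp, mul_inv_cancel_left]
  have h := phi_prod l hl (gammaNN (m + 1))
  rw [hprod, phiC_conn hC, phiC_nconn (not_connected_gammaNN _), cycleCount_gammaNN] at h
  have h2 := cycleCount_le_card C
  rw [card_sum_fin] at h2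
  have h3 : cycleCount C ≤ permLen ((gammaNN (m + 1))⁻¹ * C) := by omega
  have h4 : permLen C + cycleCount C = 2 * (m + 1) := by
    unfold permLen
    rw [card_sum_fin]
    omega
  omega

end Gamma


/-- `F_{n,n}(α,β) = Σᵢ (sᵢ|γ_{n,n}⁻¹αᵢ| + tᵢ|αᵢ|) + Σ_{i<j} e_{i,j}|βᵢ⁻¹βⱼ| + Σᵢ dᵢ|βᵢαᵢ⁻¹|`. -/
noncomputable def FnnPair (n k : ℕ) (s t d : Fin k → ℕ) (e : Fin k → Fin k → ℕ)
    (A B : Fin k → Equiv.Perm (Fin n ⊕ Fin n)) : ℕ :=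
  (∑ i, (s i * permLen ((gammaNN n)⁻¹ * A i) + t i * permLen (A i)))
    + (∑ i, ∑ j, if i < j then e i j * permLen ((B i)⁻¹ * B j) else 0)
    + (∑ i, d i * permLen (B i * (A i)⁻¹))

/-- `F_{n,n}(β) = Σᵢ (sᵢ|γ_{n,n}⁻¹βᵢ| + tᵢ|βᵢ|) + Σ_{i<j} e_{i,j}|βᵢ⁻¹βⱼ|`. -/
noncomputable def FnnOne (n k : ℕ) (s t : Fin k → ℕ) (e : Fin k → Fin k → ℕ)
    (B : Fin k → Equiv.Perm (Fin n ⊕ Fin n)) : ℕ :=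
  (∑ i, (s i * permLen ((gammaNN n)⁻¹ * B i) + t i * permLen (B i)))
    + (∑ i, ∑ j, if i < j then e i j * permLen ((B i)⁻¹ * B j) else 0)

/-- Vertices of the flow network: `Sum.inl i` are the inner vertices `1,…,k`,
`Sum.inr true` is the source and `Sum.inr false` is the sink. -/
abbrev NetVertex (k : ℕ) := Fin k ⊕ Bool

/-- The source of the flow network. -/
def netSrc (k : ℕ) : NetVertex k := Sum.inr true

/-- The sink of the flow network. -/
def netSnk (k : ℕ) : NetVertex k := Sum.inr false

/-- Capacities: `c(src,i) = sᵢ`, `c(i,snk) = tᵢ`, `c(i,j) = e_{i,j}` for `i ≠ j`,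
and `0` on all other ordered pairs. -/
def netCap {k : ℕ} (s t : Fin k → ℕ) (e : Fin k → Fin k → ℕ) :
    NetVertex k → NetVertex k → ℤ
  | Sum.inr true, Sum.inl i => s i
  | Sum.inl i, Sum.inr false => t i
  | Sum.inl i, Sum.inl j => if i = j then 0 else e i j
  | _, _ => 0

/-- A flow with respect to capacities `c`: bounded by capacities, skew-symmetric,
and conserved at every vertex other than the source and the sink. -/
def IsFlow {k : ℕ} (c f : NetVertex k → NetVertex k → ℤ) : Prop :=
  (∀ u v, f u v ≤ c u v) ∧ (∀ u v, f u v = - f v u) ∧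
    (∀ u, u ≠ netSrc k → u ≠ netSnk k → ∑ v, f v u = 0)

/-- The value `|f| = Σᵤ f(src, u)` of a flow. -/
def flowValue {k : ℕ} (f : NetVertex k → NetVertex k → ℤ) : ℤ :=
  ∑ u, f (netSrc k) u

section FlowBound

variable {k : ℕ}

theorem netCap_nonneg (s t : Fin k → ℕ) (e : Fin k → Fin k → ℕ) :
    ∀ u v, 0 ≤ netCap s t e u v := by
  intro u v
  rcases u with i | b
  · rcases v with j | b'
    · show (0 : ℤ) ≤ if i = j then 0 else (e i j : ℤ)
      split
      · exact le_refl 0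
      · exact Int.natCast_nonneg _
    · cases b'
      · exact Int.natCast_nonneg _
      · exact le_refl 0
  · cases b
    · rcases v with j | b'
      · exact le_refl 0
      · cases b' <;> exact le_refl 0
    · rcases v with j | b'
      · exact Int.natCast_nonneg _
      · cases b' <;> exact le_refl 0

theorem flow_potential_bound (s t : Fin k → ℕ) (e : Fin k → Fin k → ℕ)
    (hsym : ∀ i j, i ≠ j → e i j = e j i)
    (f : NetVertex k → NetVertex k → ℤ) (hf : IsFlow (netCap s t e) f)
    (M : ℤ) (p : Fin k → ℤ) (hp0 : ∀ i, 0 ≤ p i) (hpM : ∀ i, p i ≤ M) :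
    flowValue f * M ≤ (∑ i, ((s i : ℤ) * p i + (t i : ℤ) * (M - p i)))
      + ∑ i, ∑ j, (if i < j then
          (e i j : ℤ) * (max (p j - p i) 0 + max (p i - p j) 0) else 0) := by
  obtain ⟨hcap, hskew, hcons⟩ := hf
  set P : NetVertex k → ℤ := Sum.elim p (fun b => if b then 0 else M) with hP
  have hsplitV : ∀ g : NetVertex k → ℤ,
      ∑ v, g v = (∑ i, g (Sum.inl i)) + (g (Sum.inr true) + g (Sum.inr false)) := by
    intro g
    rw [Fintype.sum_sum_type]
    congr 1
    rw [Fintype.sum_bool]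
  have hsrc : ∑ u, f u (Sum.inr true) = - flowValue f := by
    unfold flowValue netSrc
    rw [← Finset.sum_neg_distrib]
    apply Finset.sum_congr rfl
    intro u _
    exact hskew u (Sum.inr true)
  have htotal : ∑ v : NetVertex k, ∑ u, f u v = 0 := by
    have h1 : ∑ v : NetVertex k, ∑ u, f u v = ∑ u : NetVertex k, ∑ v, f u v :=
      Finset.sum_comm
    have h2 : ∑ u : NetVertex k, ∑ v, f u v = - ∑ u : NetVertex k, ∑ v, f v u := by
      rw [← Finset.sum_neg_distrib]
      apply Finset.sum_congr rfl
      intro u _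
      rw [← Finset.sum_neg_distrib]
      apply Finset.sum_congr rfl
      intro v _
      exact hskew u v
    have h3 : ∑ u : NetVertex k, ∑ v, f v u = ∑ v : NetVertex k, ∑ u, f u v := rfl
    linarith [h1, h2, h3]
  have hsnk : ∑ u, f u (Sum.inr false) = flowValue f := by
    have hs := hsplitV (fun v => ∑ u, f u v)
    have hint : ∀ i : Fin k, ∑ u, f u (Sum.inl i) = 0 := by
      intro i
      exact hcons (Sum.inl i) (by simp [netSrc]) (by simp [netSnk])
    have hzero : ∑ i : Fin k, ∑ u, f u (Sum.inl i) = 0 :=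
      Finset.sum_eq_zero (fun i _ => hint i)
    rw [htotal] at hs
    rw [hzero] at hs
    rw [hsrc] at hs
    linarith
  -- the key identity
  have hB : ∑ v, (∑ u, f u v) * P v = flowValue f * M := by
    rw [hsplitV (fun v => (∑ u, f u v) * P v)]
    have h1 : ∑ i : Fin k, (∑ u, f u (Sum.inl i)) * P (Sum.inl i) = 0 := by
      apply Finset.sum_eq_zero
      intro i _
      rw [hcons (Sum.inl i) (by simp [netSrc]) (by simp [netSnk]), zero_mul]
    have h2 : P (Sum.inr true) = 0 := rfl
    have h3 : P (Sum.inr false) = M := rfl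
    rw [h1, h2, h3, mul_zero, hsnk, zero_add, zero_add]
  have hC : ∑ u : NetVertex k, ∑ v, f u v * P v = flowValue f * M := by
    rw [Finset.sum_comm]
    rw [← hB]
    apply Finset.sum_congr rfl
    intro v _
    rw [Finset.sum_mul]
  have hD : ∑ u : NetVertex k, ∑ v, f u v * P u = - (flowValue f * M) := by
    have h1 : ∑ u : NetVertex k, ∑ v, f u v * P u
        = - ∑ u : NetVertex k, ∑ v, f v u * P u := by
      rw [← Finset.sum_neg_distrib]
      apply Finset.sum_congr rfl
      intro u _
      rw [← Finset.sum_neg_distrib]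
      apply Finset.sum_congr rfl
      intro v _
      rw [hskew u v]
      ring
    rw [h1, Finset.sum_comm, hC]
  have hE : 2 * (flowValue f * M) = ∑ u : NetVertex k, ∑ v, f u v * (P v - P u) := by
    have h1 : ∑ u : NetVertex k, ∑ v, f u v * (P v - P u)
        = (∑ u : NetVertex k, ∑ v, f u v * P v) - ∑ u : NetVertex k, ∑ v, f u v * P u := by
      rw [← Finset.sum_sub_distrib]
      apply Finset.sum_congr rfl
      intro u _
      rw [← Finset.sum_sub_distrib]
      apply Finset.sum_congr rfl
      intro v _
      ring
    rw [h1, hC, hD]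
    ring
  -- pointwise capacity bound
  have hF : ∀ u v, f u v * (P v - P u) ≤
      netCap s t e u v * max (P v - P u) 0 + netCap s t e v u * max (P u - P v) 0 := by
    intro u v
    rcases le_total (P u) (P v) with h | h
    · have h1 : max (P v - P u) 0 = P v - P u := max_eq_left (by omega)
      have h2 : max (P u - P v) 0 = 0 := max_eq_right (by omega)
      rw [h1, h2, mul_zero, add_zero]
      exact mul_le_mul_of_nonneg_right (hcap u v) (by omega)
    · have h1 : max (P v - P u) 0 = 0 := max_eq_right (by omega)
      have h2 : max (P u - P v) 0 = P u - P v := max_eq_left (by omega)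
      have h3 : f u v * (P v - P u) = f v u * (P u - P v) := by
        rw [hskew u v]
        ring
      rw [h1, h2, h3, mul_zero, zero_add]
      exact mul_le_mul_of_nonneg_right (hcap v u) (by omega)
  -- sum the pointwise bound, fold the reversed half
  have hG : ∑ u : NetVertex k, ∑ v, f u v * (P v - P u) ≤
      2 * ∑ u : NetVertex k, ∑ v, netCap s t e u v * max (P v - P u) 0 := by
    have h1 : ∑ u : NetVertex k, ∑ v, f u v * (P v - P u) ≤
        ∑ u : NetVertex k, ∑ v, (netCap s t e u v * max (P v - P u) 0
          + netCap s t e v u * max (P u - P v) 0) :=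
      Finset.sum_le_sum (fun u _ => Finset.sum_le_sum (fun v _ => hF u v))
    have h2 : ∑ u : NetVertex k, ∑ v, (netCap s t e u v * max (P v - P u) 0
          + netCap s t e v u * max (P u - P v) 0)
        = (∑ u : NetVertex k, ∑ v, netCap s t e u v * max (P v - P u) 0)
          + ∑ u : NetVertex k, ∑ v, netCap s t e v u * max (P u - P v) 0 := by
      rw [← Finset.sum_add_distrib]
      apply Finset.sum_congr rfl
      intro u _
      rw [← Finset.sum_add_distrib]
    have h3 : ∑ u : NetVertex k, ∑ v, netCap s t e v u * max (P u - P v) 0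
        = ∑ u : NetVertex k, ∑ v, netCap s t e u v * max (P v - P u) 0 :=
      Finset.sum_comm
    linarith
  -- compute the capacity sum
  have hrow1 : ∀ i : Fin k, ∑ v, netCap s t e (Sum.inl i) v * max (P v - P (Sum.inl i)) 0
      = (∑ j, (if i = j then 0 else (e i j : ℤ)) * max (p j - p i) 0)
        + (t i : ℤ) * (M - p i) := by
    intro i
    rw [hsplitV (fun v => netCap s t e (Sum.inl i) v * max (P v - P (Sum.inl i)) 0)]
    have h1 : netCap s t e (Sum.inl i) (Sum.inr true) = 0 := rfl
    have h2 : netCap s t e (Sum.inl i) (Sum.inr false) = (t i : ℤ) := rfl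
    have h3 : max (M - p i) 0 = M - p i := max_eq_left (by have := hpM i; omega)
    have h4 : P (Sum.inr false) - P (Sum.inl i) = M - p i := by
      show M - p i = M - p i
      rfl
    rw [h1, h2, zero_mul, zero_add, h4, h3]
    have h5 : ∀ j : Fin k, netCap s t e (Sum.inl i) (Sum.inl j) *
        max (P (Sum.inl j) - P (Sum.inl i)) 0
        = (if i = j then 0 else (e i j : ℤ)) * max (p j - p i) 0 := fun j => rfl
    rw [Finset.sum_congr rfl (fun j _ => h5 j)]
  have hrow2 : ∑ v, netCap s t e (Sum.inr true) v * max (P v - P (Sum.inr true)) 0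
      = ∑ j, (s j : ℤ) * p j := by
    rw [hsplitV (fun v => netCap s t e (Sum.inr true) v * max (P v - P (Sum.inr true)) 0)]
    have h1 : netCap s t e (Sum.inr true) (Sum.inr true) = 0 := rfl
    have h2 : netCap s t e (Sum.inr true) (Sum.inr false) = 0 := rfl
    rw [h1, h2, zero_mul, zero_mul, add_zero, add_zero]
    apply Finset.sum_congr rfl
    intro j _
    have h3 : netCap s t e (Sum.inr true) (Sum.inl j) = (s j : ℤ) := rfl
    have h4 : P (Sum.inl j) - P (Sum.inr true) = p j := by
      show p j - 0 = p j
      ring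
    rw [h3, h4, max_eq_left (hp0 j)]
  have hrow3 : ∑ v, netCap s t e (Sum.inr false) v * max (P v - P (Sum.inr false)) 0 = 0 := by
    apply Finset.sum_eq_zero
    intro v _
    have h1 : netCap s t e (Sum.inr false) v = 0 := by
      rcases v with j | b
      · rfl
      · cases b <;> rfl
    rw [h1, zero_mul]
  have hee : ∀ i : Fin k, ∑ j, (if i = j then 0 else (e i j : ℤ)) * max (p j - p i) 0
      = ∑ j, (fun i j => (if i = j then 0 else (e i j : ℤ)) * max (p j - p i) 0) i j := by
    intro i
    rfl
  have hpairs : ∑ i, ∑ j, (if i = j then 0 else (e i j : ℤ)) * max (p j - p i) 0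
      = ∑ i, ∑ j, (if i < j then
          (e i j : ℤ) * (max (p j - p i) 0 + max (p i - p j) 0) else 0) := by
    rw [sum_pairs (fun i j => (if i = j then 0 else (e i j : ℤ)) * max (p j - p i) 0)
      (fun i => by simp)]
    apply Finset.sum_congr rfl
    intro i _
    apply Finset.sum_congr rfl
    intro j _
    by_cases hij : i < j
    · rw [if_pos hij, if_pos hij, if_neg (ne_of_lt hij), if_neg (ne_of_gt hij),
        hsym j i (ne_of_gt hij)]
      ring
    · rw [if_neg hij, if_neg hij]
  have hcapsum : ∑ u : NetVertex k, ∑ v, netCap s t e u v * max (P v - P u) 0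
      = (∑ i, ((s i : ℤ) * p i + (t i : ℤ) * (M - p i)))
        + ∑ i, ∑ j, (if i < j then
            (e i j : ℤ) * (max (p j - p i) 0 + max (p i - p j) 0) else 0) := by
    rw [hsplitV (fun u => ∑ v, netCap s t e u v * max (P v - P u) 0)]
    rw [Finset.sum_congr rfl (fun i _ => hrow1 i), hrow2, hrow3, add_zero]
    rw [Finset.sum_add_distrib, ← hpairs]
    rw [Finset.sum_add_distrib]
    ring
  linarith [hG, hE, hcapsum.le, hcapsum.ge]

end FlowBound


section Helpers

variable {α : Type*} [Fintype α] [DecidableEq α]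

theorem permLen_tri (X Y Z : Equiv.Perm α) :
    permLen (X⁻¹ * Z) ≤ permLen (X⁻¹ * Y) + permLen (Y⁻¹ * Z) := by
  have h := permLen_mul_le (X⁻¹ * Y) (Y⁻¹ * Z)
  have h2 : X⁻¹ * Y * (Y⁻¹ * Z) = X⁻¹ * Z := by group
  rwa [h2] at h

theorem permLen_base_le (X C : Equiv.Perm α) :
    permLen X ≤ permLen (X⁻¹ * C) + permLen C := by
  have h := permLen_mul_le (X⁻¹ * C) C⁻¹
  have h2 : X⁻¹ * C * C⁻¹ = X⁻¹ := by group
  rw [h2, permLen_inv, permLen_inv] at h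
  exact h

theorem permLen_off_le (X C : Equiv.Perm α) :
    permLen (X⁻¹ * C) ≤ permLen X + permLen C := by
  have h := permLen_mul_le X⁻¹ C
  rwa [permLen_inv] at h

theorem permLen_off_le' (X C : Equiv.Perm α) :
    permLen C ≤ permLen X + permLen (X⁻¹ * C) := by
  have h := permLen_mul_le X (X⁻¹ * C)
  have h2 : X * (X⁻¹ * C) = C := by group
  rwa [h2] at h

theorem permLen_inv_pair (X Y : Equiv.Perm α) :
    permLen (Y⁻¹ * X) = permLen (X⁻¹ * Y) := by
  rw [← permLen_inv (X⁻¹ * Y), mul_inv_rev, inv_inv]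

theorem permLen_dconv (X Y : Equiv.Perm α) :
    permLen (X⁻¹ * Y) = permLen (Y * X⁻¹) := by
  rw [permLen_mul_comm]

end Helpers

set_option maxHeartbeats 2000000 in
theorem FnnPair_connected_flow_bound (n k : ℕ) (hn : 1 ≤ n) (hk : 1 ≤ k)
    (s t d : Fin k → ℕ) (e : Fin k → Fin k → ℕ)
    (hsym : ∀ i j, i ≠ j → e i j = e j i)
    (hd : ∀ i, d i = s i + t i)
    (hd' : ∀ i, d i = ∑ j ∈ Finset.univ.erase i, e i j)
    (hst : ∀ i, 0 < s i + t i)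
    (he : ∀ i, 0 < ∑ j ∈ Finset.univ.erase i, e i j)
    (A B : Fin k → Equiv.Perm (Fin n ⊕ Fin n))
    (hconn : (∃ i, IsConnectedPerm (A i)) ∨ (∃ i, IsConnectedPerm (B i))) :
    (∀ (f : NetVertex k → NetVertex k → ℤ), IsFlow (netCap s t e) f →
        flowValue f * (2 * n - 2) + 2 ≤ (FnnPair n k s t d e A B : ℤ)) ∧
      (∀ X : ℤ, IsGreatest {v : ℤ | ∃ f, IsFlow (netCap s t e) f ∧ flowValue f = v} X →
        X * (2 * n - 2) - (FnnPair n k s t d e A B : ℤ) ≤ -2) := by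
  classical
  have main : ∀ (f : NetVertex k → NetVertex k → ℤ), IsFlow (netCap s t e) f →
      flowValue f * (2 * (n : ℤ) - 2) + 2 ≤ (FnnPair n k s t d e A B : ℤ) := by
    intro f hf
    have hn' : (1 : ℤ) ≤ (n : ℤ) := by exact_mod_cast hn
    have hM0 : (0 : ℤ) ≤ 2 * (n : ℤ) - 2 := by omega
    have hMperm : ((permLen (gammaNN n) : ℕ) : ℤ) = 2 * (n : ℤ) - 2 := by
      rw [permLen_gammaNN n hn]
      have h2 : 2 ≤ 2 * n := by omega
      push_cast [Nat.cast_sub h2]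
      ring
    -- cast of F
    have hFz : (FnnPair n k s t d e A B : ℤ)
        = (∑ i, ((s i : ℤ) * (permLen ((gammaNN n)⁻¹ * A i) : ℤ)
              + (t i : ℤ) * (permLen (A i) : ℤ)))
          + (∑ i, ∑ j, (if i < j then
              (e i j : ℤ) * (permLen ((B i)⁻¹ * B j) : ℤ) else 0))
          + ∑ i, (d i : ℤ) * (permLen (B i * (A i)⁻¹) : ℤ) := by
      unfold FnnPair
      push_cast
      try ring
    -- symmetric E
    have hEEsym : ∀ i j : Fin k,
        (permLen ((B j)⁻¹ * B i) : ℤ) = (permLen ((B i)⁻¹ * B j) : ℤ) := by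
      intro i j
      exact_mod_cast permLen_inv_pair (B i) (B j)
    -- D conversions
    have hDconv : ∀ i : Fin k,
        (permLen ((A i)⁻¹ * B i) : ℤ) = (permLen (B i * (A i)⁻¹) : ℤ) := by
      intro i
      exact_mod_cast permLen_dconv (A i) (B i)
    have hDconv' : ∀ i : Fin k,
        (permLen ((B i)⁻¹ * A i) : ℤ) = (permLen (B i * (A i)⁻¹) : ℤ) := by
      intro i
      rw [← hDconv i]
      exact_mod_cast permLen_inv_pair (A i) (B i)
    -- the pairing identity for the d-terms
    have hpairD : (∑ i, ∑ j, (if i < j then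
          (e i j : ℤ) * ((permLen (B i * (A i)⁻¹) : ℤ) + (permLen (B j * (A j)⁻¹) : ℤ))
        else 0))
        = ∑ i, (d i : ℤ) * (permLen (B i * (A i)⁻¹) : ℤ) := by
      have hsp := sum_pairs (fun i j => if i = j then 0 else
          (e i j : ℤ) * (permLen (B i * (A i)⁻¹) : ℤ)) (fun i => by simp)
      have hlhs : ∑ i : Fin k, ∑ j, (if i = j then 0 else
          (e i j : ℤ) * (permLen (B i * (A i)⁻¹) : ℤ))
          = ∑ i, (d i : ℤ) * (permLen (B i * (A i)⁻¹) : ℤ) := by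
        apply Finset.sum_congr rfl
        intro i _
        rw [← Finset.sum_erase_add _ _ (Finset.mem_univ i), if_pos rfl, add_zero]
        have : ∀ j ∈ Finset.univ.erase i, (if i = j then 0 else
            (e i j : ℤ) * (permLen (B i * (A i)⁻¹) : ℤ))
            = (e i j : ℤ) * (permLen (B i * (A i)⁻¹) : ℤ) := by
          intro j hj
          rw [if_neg (fun h => (Finset.mem_erase.mp hj).1 h.symm)]
        rw [Finset.sum_congr rfl this, ← Finset.sum_mul]
        congr 1
        rw [hd' i]
        push_cast
        rfl
      have hrhs : ∑ i : Fin k, ∑ j, (if i < j then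
          (if i = j then 0 else (e i j : ℤ) * (permLen (B i * (A i)⁻¹) : ℤ))
            + (if j = i then 0 else (e j i : ℤ) * (permLen (B j * (A j)⁻¹) : ℤ))
          else 0)
          = ∑ i, ∑ j, (if i < j then
            (e i j : ℤ) * ((permLen (B i * (A i)⁻¹) : ℤ) + (permLen (B j * (A j)⁻¹) : ℤ))
          else 0) := by
        apply Finset.sum_congr rfl
        intro i _
        apply Finset.sum_congr rfl
        intro j _
        by_cases hij : i < j
        · rw [if_pos hij, if_pos hij, if_neg (ne_of_lt hij), if_neg (ne_of_gt hij)]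
          have : ((e j i : ℕ) : ℤ) = ((e i j : ℕ) : ℤ) := by
            exact_mod_cast hsym j i (ne_of_gt hij)
          rw [this]
          ring
        · rw [if_neg hij, if_neg hij]
      rw [← hrhs, ← hsp, hlhs]
    -- connected index and its facts
    have hj0gen : ∀ i0 : Fin k, ∃ j, j ≠ i0 ∧ 1 ≤ (e i0 j : ℤ) ∧ 1 ≤ (e j i0 : ℤ) := by
      intro i0
      have hepos := he i0
      have hex : ∃ j ∈ Finset.univ.erase i0, 0 < e i0 j := by
        by_contra h
        push_neg at h
        have : ∑ j ∈ Finset.univ.erase i0, e i0 j = 0 :=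
          Finset.sum_eq_zero (fun j hj => by have := h j hj; omega)
        omega
      obtain ⟨j, hj, hpos⟩ := hex
      have hjne : j ≠ i0 := (Finset.mem_erase.mp hj).1
      refine ⟨j, hjne, by exact_mod_cast hpos, ?_⟩
      rw [hsym j i0 hjne]
      exact_mod_cast hpos
    -- chain inequalities
    have chainA : ∀ (X : Equiv.Perm (Fin n ⊕ Fin n)) (i j : Fin k),
        (permLen (X⁻¹ * A i) : ℤ) ≤ (permLen (X⁻¹ * A j) : ℤ)
          + ((permLen (B i * (A i)⁻¹) : ℤ) + (permLen ((B i)⁻¹ * B j) : ℤ)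
            + (permLen (B j * (A j)⁻¹) : ℤ)) := by
      intro X i j
      have h1 := permLen_tri X (A j) (A i)
      have h2 := permLen_tri (A j) (B j) (A i)
      have h3 := permLen_tri (B j) (B i) (A i)
      have e1 := hDconv j
      have e2 := hEEsym i j
      have e3 := hDconv' i
      have h1' : (permLen (X⁻¹ * A i) : ℤ) ≤
          (permLen (X⁻¹ * A j) : ℤ) + (permLen ((A j)⁻¹ * A i) : ℤ) := by exact_mod_cast h1
      have h2' : (permLen ((A j)⁻¹ * A i) : ℤ) ≤
          (permLen ((A j)⁻¹ * B j) : ℤ) + (permLen ((B j)⁻¹ * A i) : ℤ) := by exact_mod_cast h2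
      have h3' : (permLen ((B j)⁻¹ * A i) : ℤ) ≤
          (permLen ((B j)⁻¹ * B i) : ℤ) + (permLen ((B i)⁻¹ * A i) : ℤ) := by exact_mod_cast h3
      omega
    have chainB : ∀ (X : Equiv.Perm (Fin n ⊕ Fin n)) (i j : Fin k),
        (permLen (X⁻¹ * B i) : ℤ) ≤ (permLen (X⁻¹ * B j) : ℤ)
          + (permLen ((B i)⁻¹ * B j) : ℤ) := by
      intro X i j
      have h1 := permLen_tri X (B j) (B i)
      have h1' : (permLen (X⁻¹ * B i) : ℤ) ≤
          (permLen (X⁻¹ * B j) : ℤ) + (permLen ((B j)⁻¹ * B i) : ℤ) := by exact_mod_cast h1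
      have := hEEsym i j
      omega
    -- the two finishing moves
    have finish_t : ∀ (q U V : Fin k → ℤ) (W : Fin k → Fin k → ℤ) (istar : Fin k),
        (∀ i, 0 ≤ q i) → (∀ i, q i ≤ U i) →
        (∀ i, 2 * (n : ℤ) - 2 ≤ q i + V i) → (∀ i, q i ≤ 2 * (n : ℤ) - 2 + V i) →
        (∀ i j, i ≠ j → q i - q j ≤ W i j ∧ q j - q i ≤ W i j) →
        (2 * (n : ℤ) - 2 + 2 ≤ q istar + V istar) → (1 ≤ (t istar : ℤ)) →
        ((∑ i, ((s i : ℤ) * U i + (t i : ℤ) * V i))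
            + (∑ i, ∑ j, (if i < j then (e i j : ℤ) * W i j else 0))
          = (FnnPair n k s t d e A B : ℤ)) →
        flowValue f * (2 * (n : ℤ) - 2) + 2 ≤ (FnnPair n k s t d e A B : ℤ) := by
      intro q U V W istar h0 h1 h2 h3 h4 h5 h6 hRHS
      obtain ⟨j0, hj0a, hj0b, hj0c⟩ := hj0gen istar
      have hmaster := master (2 * (n : ℤ) - 2) hM0 (fun i => (s i : ℤ)) (fun i => (t i : ℤ))
        (fun i j => (e i j : ℤ)) q U V W istar
        (fun i => Int.natCast_nonneg _) (fun i => Int.natCast_nonneg _)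
        (fun i j => Int.natCast_nonneg _) h0 h1 h2 h3 h4
        (fun i => by show (1 : ℤ) ≤ (s i : ℤ) + (t i : ℤ); have := hst i; omega) h5 h6 ⟨j0, hj0a, hj0b, hj0c⟩
      have hflow := flow_potential_bound s t e hsym f hf (2 * (n : ℤ) - 2)
        (fun i => min (q i) (2 * (n : ℤ) - 2))
        (fun i => le_min (h0 i) hM0) (fun i => min_le_right _ _)
      beta_reduce at hmaster hflow
      rw [← hRHS]
      linarith [hmaster, hflow]
    have finish_s : ∀ (q U V : Fin k → ℤ) (W : Fin k → Fin k → ℤ) (istar : Fin k),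
        (∀ i, 0 ≤ q i) → (∀ i, q i ≤ U i) →
        (∀ i, 2 * (n : ℤ) - 2 ≤ q i + V i) → (∀ i, q i ≤ 2 * (n : ℤ) - 2 + V i) →
        (∀ i j, i ≠ j → q i - q j ≤ W i j ∧ q j - q i ≤ W i j) →
        (2 * (n : ℤ) - 2 + 2 ≤ q istar + V istar) → (1 ≤ (s istar : ℤ)) →
        ((∑ i, ((t i : ℤ) * U i + (s i : ℤ) * V i))
            + (∑ i, ∑ j, (if i < j then (e i j : ℤ) * W i j else 0))
          = (FnnPair n k s t d e A B : ℤ)) →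
        flowValue f * (2 * (n : ℤ) - 2) + 2 ≤ (FnnPair n k s t d e A B : ℤ) := by
      intro q U V W istar h0 h1 h2 h3 h4 h5 h6 hRHS
      obtain ⟨j0, hj0a, hj0b, hj0c⟩ := hj0gen istar
      have hmaster := master (2 * (n : ℤ) - 2) hM0 (fun i => (t i : ℤ)) (fun i => (s i : ℤ))
        (fun i j => (e i j : ℤ)) q U V W istar
        (fun i => Int.natCast_nonneg _) (fun i => Int.natCast_nonneg _)
        (fun i j => Int.natCast_nonneg _) h0 h1 h2 h3 h4
        (fun i => by show (1 : ℤ) ≤ (t i : ℤ) + (s i : ℤ); have := hst i; omega) h5 h6 ⟨j0, hj0a, hj0b, hj0c⟩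
      have hflow := flow_potential_bound s t e hsym f hf (2 * (n : ℤ) - 2)
        (fun i => 2 * (n : ℤ) - 2 - min (q i) (2 * (n : ℤ) - 2))
        (fun i => by
          show (0 : ℤ) ≤ 2 * (n : ℤ) - 2 - min (q i) (2 * (n : ℤ) - 2)
          have := min_le_right (q i) (2 * (n : ℤ) - 2)
          omega)
        (fun i => by
          show 2 * (n : ℤ) - 2 - min (q i) (2 * (n : ℤ) - 2) ≤ 2 * (n : ℤ) - 2
          have := le_min (h0 i) hM0
          omega)
      have hc1 : (∑ i, ((s i : ℤ) * (2 * (n : ℤ) - 2 - min (q i) (2 * (n : ℤ) - 2))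
            + (t i : ℤ) * (2 * (n : ℤ) - 2
              - (2 * (n : ℤ) - 2 - min (q i) (2 * (n : ℤ) - 2)))))
          = ∑ i, ((t i : ℤ) * min (q i) (2 * (n : ℤ) - 2)
            + (s i : ℤ) * (2 * (n : ℤ) - 2 - min (q i) (2 * (n : ℤ) - 2))) := by
        apply Finset.sum_congr rfl
        intro i _
        ring
      have hc2 : (∑ i, ∑ j, (if i < j then (e i j : ℤ) *
            (max ((2 * (n : ℤ) - 2 - min (q j) (2 * (n : ℤ) - 2))
                - (2 * (n : ℤ) - 2 - min (q i) (2 * (n : ℤ) - 2))) 0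
              + max ((2 * (n : ℤ) - 2 - min (q i) (2 * (n : ℤ) - 2))
                - (2 * (n : ℤ) - 2 - min (q j) (2 * (n : ℤ) - 2))) 0) else 0))
          = ∑ i, ∑ j, (if i < j then (e i j : ℤ) *
            (max (min (q j) (2 * (n : ℤ) - 2) - min (q i) (2 * (n : ℤ) - 2)) 0
              + max (min (q i) (2 * (n : ℤ) - 2) - min (q j) (2 * (n : ℤ) - 2)) 0) else 0) := by
        apply Finset.sum_congr rfl
        intro i _
        apply Finset.sum_congr rfl
        intro j _
        by_cases hij : i < j
        · rw [if_pos hij, if_pos hij]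
          congr 1
          omega
        · rw [if_neg hij, if_neg hij]
      beta_reduce at hmaster hflow
      rw [hc1, hc2] at hflow
      rw [← hRHS]
      linarith [hmaster, hflow]
    -- split on where the connected permutation lives
    rcases hconn with ⟨i0, hC⟩ | ⟨i0, hC⟩
    · -- connected A
      have hgen : (2 * n : ℤ) ≤ (permLen ((gammaNN n)⁻¹ * A i0) : ℤ)
          + (permLen (A i0) : ℤ) := by
        exact_mod_cast genus_connected hn hC
      have hRHSA : (∑ i, ((s i : ℤ) * (permLen ((gammaNN n)⁻¹ * A i) : ℤ)
              + (t i : ℤ) * (permLen (A i) : ℤ)))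
          + (∑ i, ∑ j, (if i < j then (e i j : ℤ) *
              ((permLen (B i * (A i)⁻¹) : ℤ) + (permLen ((B i)⁻¹ * B j) : ℤ)
                + (permLen (B j * (A j)⁻¹) : ℤ)) else 0))
          = (FnnPair n k s t d e A B : ℤ) := by
        rw [hFz]
        have hsplitW : (∑ i, ∑ j, (if i < j then (e i j : ℤ) *
              ((permLen (B i * (A i)⁻¹) : ℤ) + (permLen ((B i)⁻¹ * B j) : ℤ)
                + (permLen (B j * (A j)⁻¹) : ℤ)) else 0))
            = (∑ i, ∑ j, (if i < j then
                (e i j : ℤ) * (permLen ((B i)⁻¹ * B j) : ℤ) else 0))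
              + ∑ i, ∑ j, (if i < j then (e i j : ℤ) *
                ((permLen (B i * (A i)⁻¹) : ℤ) + (permLen (B j * (A j)⁻¹) : ℤ)) else 0) := by
          rw [← Finset.sum_add_distrib]
          apply Finset.sum_congr rfl
          intro i _
          rw [← Finset.sum_add_distrib]
          apply Finset.sum_congr rfl
          intro j _
          by_cases hij : i < j
          · rw [if_pos hij, if_pos hij, if_pos hij]
            ring
          · rw [if_neg hij, if_neg hij, if_neg hij, add_zero]
        rw [hsplitW, hpairD]
        ring
      by_cases htpos : 1 ≤ (t i0 : ℤ)
      · refine finish_t (fun i => (permLen ((gammaNN n)⁻¹ * A i) : ℤ))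
          (fun i => (permLen ((gammaNN n)⁻¹ * A i) : ℤ)) (fun i => (permLen (A i) : ℤ))
          (fun i j => (permLen (B i * (A i)⁻¹) : ℤ) + (permLen ((B i)⁻¹ * B j) : ℤ)
            + (permLen (B j * (A j)⁻¹) : ℤ)) i0
          (fun i => Int.natCast_nonneg _) (fun i => le_refl _) ?_ ?_ ?_ (by beta_reduce; omega) htpos hRHSA
        · intro i
          beta_reduce
          have hb : ((permLen (gammaNN n) : ℕ) : ℤ) ≤ (permLen ((gammaNN n)⁻¹ * A i) : ℤ)
              + (permLen (A i) : ℤ) := by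
            exact_mod_cast permLen_base_le (gammaNN n) (A i)
          omega
        · intro i
          beta_reduce
          have hb : (permLen ((gammaNN n)⁻¹ * A i) : ℤ) ≤ ((permLen (gammaNN n) : ℕ) : ℤ)
              + (permLen (A i) : ℤ) := by
            exact_mod_cast permLen_off_le (gammaNN n) (A i)
          omega
        · intro i j hij
          beta_reduce
          have h1 := chainA (gammaNN n) i j
          have h2 := chainA (gammaNN n) j i
          have h3 := hEEsym i j
          omega
      · have hspos : 1 ≤ (s i0 : ℤ) := by
          have := hst i0
          omega
        have chainA1 : ∀ i j : Fin k, (permLen (A i) : ℤ) ≤ (permLen (A j) : ℤ)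
            + ((permLen (B i * (A i)⁻¹) : ℤ) + (permLen ((B i)⁻¹ * B j) : ℤ)
              + (permLen (B j * (A j)⁻¹) : ℤ)) := by
          intro i j
          have h := chainA 1 i j
          simp only [inv_one, one_mul] at h
          exact h
        refine finish_s (fun i => (permLen (A i) : ℤ)) (fun i => (permLen (A i) : ℤ))
          (fun i => (permLen ((gammaNN n)⁻¹ * A i) : ℤ))
          (fun i j => (permLen (B i * (A i)⁻¹) : ℤ) + (permLen ((B i)⁻¹ * B j) : ℤ)
            + (permLen (B j * (A j)⁻¹) : ℤ)) i0
          (fun i => Int.natCast_nonneg _) (fun i => le_refl _) ?_ ?_ ?_ (by beta_reduce; omega) hspos ?_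
        · intro i
          beta_reduce
          have hb : ((permLen (gammaNN n) : ℕ) : ℤ) ≤ (permLen ((gammaNN n)⁻¹ * A i) : ℤ)
              + (permLen (A i) : ℤ) := by
            exact_mod_cast permLen_base_le (gammaNN n) (A i)
          omega
        · intro i
          beta_reduce
          have hb : (permLen (A i) : ℤ) ≤ ((permLen (gammaNN n) : ℕ) : ℤ)
              + (permLen ((gammaNN n)⁻¹ * A i) : ℤ) := by
            exact_mod_cast permLen_off_le' (gammaNN n) (A i)
          omega
        · intro i j hij
          beta_reduce
          have h1 := chainA1 i j
          have h2 := chainA1 j i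
          have h3 := hEEsym i j
          omega
        · beta_reduce
          rw [← hRHSA]
          congr 1
          apply Finset.sum_congr rfl
          intro i _
          ring
    · -- connected B
      have hgen : (2 * n : ℤ) ≤ (permLen ((gammaNN n)⁻¹ * B i0) : ℤ)
          + (permLen (B i0) : ℤ) := by
        exact_mod_cast genus_connected hn hC
      have hSBle : ∀ i : Fin k, (permLen ((gammaNN n)⁻¹ * B i) : ℤ)
          ≤ (permLen ((gammaNN n)⁻¹ * A i) : ℤ) + (permLen (B i * (A i)⁻¹) : ℤ) := by
        intro i
        have h := permLen_tri (gammaNN n) (A i) (B i)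
        have h' : (permLen ((gammaNN n)⁻¹ * B i) : ℤ) ≤
            (permLen ((gammaNN n)⁻¹ * A i) : ℤ) + (permLen ((A i)⁻¹ * B i) : ℤ) := by
          exact_mod_cast h
        have := hDconv i
        omega
      have hTBle : ∀ i : Fin k, (permLen (B i) : ℤ)
          ≤ (permLen (A i) : ℤ) + (permLen (B i * (A i)⁻¹) : ℤ) := by
        intro i
        have h := permLen_off_le' (A i) (B i)
        have h' : (permLen (B i) : ℤ) ≤
            (permLen (A i) : ℤ) + (permLen ((A i)⁻¹ * B i) : ℤ) := by
          exact_mod_cast h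
        have := hDconv i
        omega
      have hRHSB : (∑ i, ((s i : ℤ) * ((permLen ((gammaNN n)⁻¹ * A i) : ℤ)
              + (permLen (B i * (A i)⁻¹) : ℤ))
            + (t i : ℤ) * ((permLen (A i) : ℤ) + (permLen (B i * (A i)⁻¹) : ℤ))))
          + (∑ i, ∑ j, (if i < j then
              (e i j : ℤ) * (permLen ((B i)⁻¹ * B j) : ℤ) else 0))
          = (FnnPair n k s t d e A B : ℤ) := by
        rw [hFz]
        have hptwise : (∑ i, ((s i : ℤ) * ((permLen ((gammaNN n)⁻¹ * A i) : ℤ)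
              + (permLen (B i * (A i)⁻¹) : ℤ))
            + (t i : ℤ) * ((permLen (A i) : ℤ) + (permLen (B i * (A i)⁻¹) : ℤ))))
            = (∑ i, ((s i : ℤ) * (permLen ((gammaNN n)⁻¹ * A i) : ℤ)
              + (t i : ℤ) * (permLen (A i) : ℤ)))
              + ∑ i, (d i : ℤ) * (permLen (B i * (A i)⁻¹) : ℤ) := by
          rw [← Finset.sum_add_distrib]
          apply Finset.sum_congr rfl
          intro i _
          have hdi : ((d i : ℕ) : ℤ) = (s i : ℤ) + (t i : ℤ) := by
            exact_mod_cast hd i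
          rw [hdi]
          ring
        rw [hptwise]
        ring
      by_cases htpos : 1 ≤ (t i0 : ℤ)
      · refine finish_t (fun i => (permLen ((gammaNN n)⁻¹ * B i) : ℤ))
          (fun i => (permLen ((gammaNN n)⁻¹ * A i) : ℤ) + (permLen (B i * (A i)⁻¹) : ℤ))
          (fun i => (permLen (A i) : ℤ) + (permLen (B i * (A i)⁻¹) : ℤ))
          (fun i j => (permLen ((B i)⁻¹ * B j) : ℤ)) i0
          (fun i => Int.natCast_nonneg _) hSBle ?_ ?_ ?_ ?_ htpos hRHSB
        · intro i
          beta_reduce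
          have hb : ((permLen (gammaNN n) : ℕ) : ℤ) ≤ (permLen ((gammaNN n)⁻¹ * B i) : ℤ)
              + (permLen (B i) : ℤ) := by
            exact_mod_cast permLen_base_le (gammaNN n) (B i)
          have := hTBle i
          omega
        · intro i
          beta_reduce
          have hb : (permLen ((gammaNN n)⁻¹ * B i) : ℤ) ≤ ((permLen (gammaNN n) : ℕ) : ℤ)
              + (permLen (B i) : ℤ) := by
            exact_mod_cast permLen_off_le (gammaNN n) (B i)
          have := hTBle i
          omega
        · intro i j hij
          beta_reduce
          have h1 := chainB (gammaNN n) i j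
          have h2 := chainB (gammaNN n) j i
          have h3 := hEEsym i j
          omega
        · beta_reduce
          have := hTBle i0
          omega
      · have hspos : 1 ≤ (s i0 : ℤ) := by
          have := hst i0
          omega
        have chainB1 : ∀ i j : Fin k, (permLen (B i) : ℤ) ≤ (permLen (B j) : ℤ)
            + (permLen ((B i)⁻¹ * B j) : ℤ) := by
          intro i j
          have h := chainB 1 i j
          simp only [inv_one, one_mul] at h
          exact h
        refine finish_s (fun i => (permLen (B i) : ℤ))
          (fun i => (permLen (A i) : ℤ) + (permLen (B i * (A i)⁻¹) : ℤ))
          (fun i => (permLen ((gammaNN n)⁻¹ * A i) : ℤ) + (permLen (B i * (A i)⁻¹) : ℤ))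
          (fun i j => (permLen ((B i)⁻¹ * B j) : ℤ)) i0
          (fun i => Int.natCast_nonneg _) hTBle ?_ ?_ ?_ ?_ hspos ?_
        · intro i
          beta_reduce
          have hb : ((permLen (gammaNN n) : ℕ) : ℤ) ≤ (permLen ((gammaNN n)⁻¹ * B i) : ℤ)
              + (permLen (B i) : ℤ) := by
            exact_mod_cast permLen_base_le (gammaNN n) (B i)
          have := hSBle i
          omega
        · intro i
          beta_reduce
          have hb : (permLen (B i) : ℤ) ≤ ((permLen (gammaNN n) : ℕ) : ℤ)
              + (permLen ((gammaNN n)⁻¹ * B i) : ℤ) := by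
            exact_mod_cast permLen_off_le' (gammaNN n) (B i)
          have := hSBle i
          omega
        · intro i j hij
          beta_reduce
          have h1 := chainB1 i j
          have h2 := chainB1 j i
          have h3 := hEEsym i j
          omega
        · beta_reduce
          have := hSBle i0
          omega
        · beta_reduce
          rw [← hRHSB]
          congr 1
          apply Finset.sum_congr rfl
          intro i _
          ring
  refine ⟨fun f hf => main f hf, ?_⟩
  rintro X ⟨⟨f, hf, rfl⟩, -⟩
  have := main f hf
  linarith
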